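/- Let Θ be a nonempty index set and (κ_θ)_{θ∈Θ} a family of Markov kernels on ℝ^d with nonlinear Markov operator P̄f(x) = sup_{θ∈Θ} ∫ f dκ_θ(x,·). Let Φ : [0,∞) → [0,∞) be strictly increasing and continuous with Φ(0) = 0, and let C : ℝ^d × ℝ^d → ℝ be such that e ↦ C(x,e) is Borel measurable for each x. Assume the shift Harnack inequality: Φ(P̄f(x)) ≤ P̄(Φ∘f(e+·))(x)·e^{C(x,e)} for all bounded Borel measurable f ≥ 0 and all x, e ∈ ℝ^d. Assume there is a countable subset Θ₀ ⊆ Θ and Borel functions g_θ : ℝ^d → (0,∞) for θ ∈ Θ₀ such that P̄f(x) ≤ sup_{θ∈Θ₀} ∫ g_θ(y) f(y) κ_θ(x,dy) for all bounded Borel measurable f ≥ 0 and x ∈ ℝ^d. Then for every Borel set A ⊆ ℝ^d of Lebesgue measure zero and every x ∈ ℝ^d one has P̄1_A(x) = 0; in particular, every kernel κ_θ(x,·) (θ ∈ Θ, x ∈ ℝ^d) is absolutely continuous with respect to Lebesgue measure, so P̄ admits a sup transition density with respect to Lebesgue measure. -/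

import Mathlib

open MeasureTheory ProbabilityTheory Filter ENNReal

/-- The nonlinear Markov operator `P̄ f x = ⨆ θ, ∫ f dκ_θ(x,·)` associated with a family
of Markov kernels on `ℝ^d`. -/
noncomputable def nlOp {d : ℕ} {Θ : Type*}
    (κ : Θ → Kernel (EuclideanSpace ℝ (Fin d)) (EuclideanSpace ℝ (Fin d)))
    (f : EuclideanSpace ℝ (Fin d) → ℝ) (x : EuclideanSpace ℝ (Fin d)) : ℝ :=
  ⨆ θ, ∫ y, f y ∂(κ θ x)

theorem stmt_7 {d : ℕ} {Θ : Type*} [Nonempty Θ]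
    (κ : Θ → Kernel (EuclideanSpace ℝ (Fin d)) (EuclideanSpace ℝ (Fin d)))
    (hκ : ∀ θ, IsMarkovKernel (κ θ))
    -- Φ strictly increasing continuous with Φ(0) = 0
    (Φ : ℝ → ℝ)
    (hΦmono : StrictMonoOn Φ (Set.Ici 0))
    (hΦcont : ContinuousOn Φ (Set.Ici 0))
    (hΦ0 : Φ 0 = 0)
    (C : EuclideanSpace ℝ (Fin d) → EuclideanSpace ℝ (Fin d) → ℝ)
    (hCmeas : ∀ x, Measurable (C x))
    -- shift Harnack inequality
    (hShiftHarnack : ∀ f : EuclideanSpace ℝ (Fin d) → ℝ, Measurable f → (∀ y, 0 ≤ f y) →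
      (∃ M, ∀ y, f y ≤ M) → ∀ x e,
      Φ (nlOp κ f x) ≤ nlOp κ (fun y => Φ (f (e + y))) x * Real.exp (C x e))
    -- countable domination with positive weights
    (Θ₀ : Set Θ) (hΘ₀ : Θ₀.Countable) (hΘ₀ne : Θ₀.Nonempty)
    (g : Θ → EuclideanSpace ℝ (Fin d) → ℝ)
    (hgmeas : ∀ θ ∈ Θ₀, Measurable (g θ))
    (hgpos : ∀ θ ∈ Θ₀, ∀ y, 0 < g θ y)
    (hdom : ∀ f : EuclideanSpace ℝ (Fin d) → ℝ, Measurable f → (∀ y, 0 ≤ f y) →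
      (∃ M, ∀ y, f y ≤ M) → ∀ x,
      nlOp κ f x ≤ ⨆ θ : Θ₀, ∫ y, g θ y * f y ∂(κ θ x)) :
    (∀ A : Set (EuclideanSpace ℝ (Fin d)), MeasurableSet A → volume A = 0 →
      ∀ x, nlOp κ (A.indicator fun _ => (1:ℝ)) x = 0) ∧
    (∀ θ x, κ θ x ≪ volume) := by
  haveI := fun θ => hκ θ
  haveI : Nonempty Θ₀ := hΘ₀ne.to_subtype
  have hΦ1 : 0 < Φ 1 := by
    have := hΦmono (Set.mem_Ici.mpr le_rfl) (Set.mem_Ici.mpr zero_le_one) zero_lt_one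
    rwa [hΦ0] at this
  have key : ∀ A : Set (EuclideanSpace ℝ (Fin d)), MeasurableSet A → volume A = 0 →
      ∀ x, nlOp κ (A.indicator fun _ => (1:ℝ)) x = 0 := by
    intro A hA hA0 x
    -- Step 1: find a shift e such that all κ θ x (for θ ∈ Θ₀) vanish on the shifted set
    have hθae : ∀ θ ∈ Θ₀, ∀ᵐ e : EuclideanSpace ℝ (Fin d),
        (κ θ x) ((fun y => e + y) ⁻¹' A) = 0 := by
      intro θ hθ
      have hmeasF : Measurable fun p : EuclideanSpace ℝ (Fin d) × EuclideanSpace ℝ (Fin d) =>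
          A.indicator (fun _ => (1:ℝ≥0∞)) (p.1 + p.2) :=
        (measurable_const.indicator hA).comp measurable_add
      have hH : Measurable fun e => ∫⁻ y, A.indicator (fun _ => (1:ℝ≥0∞)) (e + y) ∂(κ θ x) :=
        Measurable.lintegral_prod_right hmeasF
      have hzero : ∫⁻ e, (∫⁻ y, A.indicator (fun _ => (1:ℝ≥0∞)) (e + y) ∂(κ θ x)) ∂volume
          = 0 := by
        rw [lintegral_lintegral_swap hmeasF.aemeasurable]
        have hinner : ∀ y : EuclideanSpace ℝ (Fin d),
            ∫⁻ e, A.indicator (fun _ => (1:ℝ≥0∞)) (e + y) ∂volume = 0 := by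
          intro y
          have heq : ∀ e : EuclideanSpace ℝ (Fin d),
              A.indicator (fun _ => (1:ℝ≥0∞)) (e + y)
                = Set.indicator ((fun e => e + y) ⁻¹' A) (1 : EuclideanSpace ℝ (Fin d) → ℝ≥0∞) e := by
            intro e
            by_cases h : e + y ∈ A <;> simp [Set.indicator, h, Set.mem_preimage]
          simp_rw [heq]
          rw [lintegral_indicator_one (hA.preimage (measurable_add_const y)),
            measure_preimage_add_right, hA0]
        simp [hinner]
      have := (lintegral_eq_zero_iff hH).mp hzero
      filter_upwards [this] with e he
      have heq2 : ∫⁻ y, A.indicator (fun _ => (1:ℝ≥0∞)) (e + y) ∂(κ θ x)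
          = (κ θ x) ((fun y => e + y) ⁻¹' A) := by
        have heq : ∀ y : EuclideanSpace ℝ (Fin d),
            A.indicator (fun _ => (1:ℝ≥0∞)) (e + y)
              = Set.indicator ((fun y => e + y) ⁻¹' A) (1 : EuclideanSpace ℝ (Fin d) → ℝ≥0∞) y := by
          intro y
          by_cases h : e + y ∈ A <;> simp [Set.indicator, h, Set.mem_preimage]
        simp_rw [heq]
        rw [lintegral_indicator_one (hA.preimage (measurable_const_add e))]
      rw [← heq2]
      exact he
    have hvolne : (volume : Measure (EuclideanSpace ℝ (Fin d))) ≠ 0 := by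
      intro h0
      have : (0:ℝ≥0∞) < volume (Set.univ : Set (EuclideanSpace ℝ (Fin d))) :=
        isOpen_univ.measure_pos volume ⟨0, trivial⟩
      rw [h0] at this
      simp at this
    haveI : (ae (volume : Measure (EuclideanSpace ℝ (Fin d)))).NeBot := ae_neBot.mpr hvolne
    obtain ⟨e, he⟩ := ((ae_ball_iff hΘ₀).mpr hθae).exists
    set S : Set (EuclideanSpace ℝ (Fin d)) := (fun y => e + y) ⁻¹' A with hSdef
    have hS : MeasurableSet S := hA.preimage (measurable_const_add e)
    -- Step 2: the shifted function Φ ∘ (1_A (e + ·)) is Φ(1) · 1_S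
    have hf₂eq : ∀ y, Φ ((A.indicator fun _ => (1:ℝ)) (e + y))
        = S.indicator (fun _ => Φ 1) y := by
      intro y
      by_cases h : e + y ∈ A
      · simp [Set.indicator, h, hSdef, Set.mem_preimage]
      · simp [Set.indicator, h, hSdef, Set.mem_preimage, hΦ0]
    -- Step 3: nlOp of the shifted function is ≤ 0 by domination
    have hf₂le : nlOp κ (fun y => Φ ((A.indicator fun _ => (1:ℝ)) (e + y))) x ≤ 0 := by
      have hmeas : Measurable fun y => Φ ((A.indicator fun _ => (1:ℝ)) (e + y)) := by
        simp_rw [hf₂eq]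
        exact measurable_const.indicator hS
      have hnn : ∀ y, 0 ≤ Φ ((A.indicator fun _ => (1:ℝ)) (e + y)) := by
        intro y
        rw [hf₂eq]
        exact Set.indicator_nonneg (fun _ _ => hΦ1.le) y
      have hbd : ∃ M, ∀ y, Φ ((A.indicator fun _ => (1:ℝ)) (e + y)) ≤ M := by
        refine ⟨Φ 1, fun y => ?_⟩
        rw [hf₂eq]
        exact Set.indicator_le_self' (fun _ _ => hΦ1.le) y |>.trans_eq rfl
          |>.trans (le_refl _) |>.trans (by by_cases h : y ∈ S <;> simp [Set.indicator, h, hΦ1.le])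
      have := hdom _ hmeas hnn hbd x
      refine this.trans (ciSup_le fun θ => le_of_eq ?_)
      have hnull : (κ (θ : Θ) x) S = 0 := he θ θ.2
      have : (fun y => g θ y * Φ ((A.indicator fun _ => (1:ℝ)) (e + y)))
          =ᵐ[κ (θ : Θ) x] 0 := by
        filter_upwards [measure_eq_zero_iff_ae_notMem.mp hnull] with y hy
        rw [hf₂eq, Set.indicator_of_notMem hy]
        simp
      rw [integral_congr_ae this]
      simp
    -- nlOp is nonneg on nonneg functions
    have hnl_nonneg : ∀ f : EuclideanSpace ℝ (Fin d) → ℝ, (∀ y, 0 ≤ f y) →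
        ∀ z, 0 ≤ nlOp κ f z := by
      intro f hf z
      exact Real.iSup_nonneg fun θ => integral_nonneg hf
    have hf₂zero : nlOp κ (fun y => Φ ((A.indicator fun _ => (1:ℝ)) (e + y))) x = 0 :=
      le_antisymm hf₂le (hnl_nonneg _ (fun y => by
        rw [hf₂eq]; exact Set.indicator_nonneg (fun _ _ => hΦ1.le) y) x)
    -- Step 4: shift Harnack
    have hmeas₁ : Measurable (A.indicator fun _ => (1:ℝ)) := measurable_const.indicator hA
    have hnn₁ : ∀ y, 0 ≤ (A.indicator fun _ => (1:ℝ)) y :=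
      fun y => Set.indicator_nonneg (fun _ _ => zero_le_one) y
    have hbd₁ : ∃ M, ∀ y, (A.indicator fun _ => (1:ℝ)) y ≤ M :=
      ⟨1, fun y => by by_cases h : y ∈ A <;> simp [Set.indicator, h]⟩
    have hH := hShiftHarnack _ hmeas₁ hnn₁ hbd₁ x e
    rw [hf₂zero, zero_mul] at hH
    have hnn : 0 ≤ nlOp κ (A.indicator fun _ => (1:ℝ)) x := hnl_nonneg _ hnn₁ x
    by_contra hne'
    have hpos : 0 < nlOp κ (A.indicator fun _ => (1:ℝ)) x := lt_of_le_of_ne hnn (Ne.symm hne')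
    have := hΦmono (Set.mem_Ici.mpr le_rfl) (Set.mem_Ici.mpr hnn) hpos
    rw [hΦ0] at this
    linarith
  refine ⟨key, fun θ x => Measure.AbsolutelyContinuous.mk fun s hs hs0 => ?_⟩
  have hkey := key s hs hs0 x
  have hle : ∫ y, (s.indicator fun _ => (1:ℝ)) y ∂(κ θ x)
      ≤ nlOp κ (s.indicator fun _ => (1:ℝ)) x := by
    apply le_ciSup (f := fun θ' => ∫ y, (s.indicator fun _ => (1:ℝ)) y ∂(κ θ' x))
    refine ⟨1, ?_⟩
    rintro _ ⟨θ', rfl⟩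
    dsimp only
    rw [integral_indicator_const (1:ℝ) hs]
    simp only [smul_eq_mul, mul_one]
    exact ENNReal.toReal_mono (by simp) prob_le_one
  rw [hkey] at hle
  have hint : ∫ y, (s.indicator fun _ => (1:ℝ)) y ∂(κ θ x) = ((κ θ x) s).toReal := by
    rw [integral_indicator_const (1:ℝ) hs]; simp [Measure.real]
  rw [hint] at hle
  have := le_antisymm hle ENNReal.toReal_nonneg
  exact (ENNReal.toReal_eq_zero_iff _).mp this |>.resolve_right (measure_ne_top _ _)
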